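/- For $f = \frac{e^{x-2y}}{xy(x+y)}$, the sums of iterated constant terms over the two orthogonal bases agree: $\mathrm{ICT}_{x,y} f + \mathrm{ICT}_{x,x+y} f = \mathrm{ICT}_{y,x} f + \mathrm{ICT}_{y,x+y} f = \frac{10}{3}$. -/

import Mathlib

/- The two orthogonal-basis expansions of the generalized constant term
`CT^𝒜(f)` of `f = e^{x-2y}/(xy(x+y))` for the arrangement `{x=0, y=0, x+y=0}` agree:
`ICT_{x,y} f + ICT_{x,x+y} f = ICT_{y,x} f + ICT_{y,x+y} f = 10/3`.
The iterated constant terms are modeled via iterated Laurent series as in the previous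
statements. -/

noncomputable section
open PowerSeries

/-- The iterated constant term: coefficient of the outer variable to the power `0`,
then of the inner variable to the power `0`. -/
def ICT2 (f : LaurentSeries (LaurentSeries ℂ)) : ℂ := (f.coeff 0).coeff 0

/-- The inner variable, as an element of the base Laurent series field. -/
def innerVar : LaurentSeries ℂ := HahnSeries.single 1 1

/-- The outer variable. -/
def outerVar : LaurentSeries (LaurentSeries ℂ) := HahnSeries.single 1 1

/-- `e^{cU}` in the outer variable, with `c` in the base field. -/
def expOuter (c : LaurentSeries ℂ) : LaurentSeries (LaurentSeries ℂ) :=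
  (HahnSeries.ofPowerSeries ℤ (LaurentSeries ℂ)) (rescale c (PowerSeries.exp (LaurentSeries ℂ)))

/-- `e^{cx}` in the inner variable, `c : ℂ`. -/
def expInner (c : ℂ) : LaurentSeries ℂ :=
  (HahnSeries.ofPowerSeries ℤ ℂ) (rescale c (PowerSeries.exp ℂ))

/-- `f` in `ℂ((x))((y))`: constant term first in `y`, then in `x`. -/
def f_xy : LaurentSeries (LaurentSeries ℂ) :=
  HahnSeries.C (expInner 1) * expOuter (-2) *
    (HahnSeries.C innerVar * outerVar * (HahnSeries.C innerVar + outerVar))⁻¹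

/-- `f` in `ℂ((y))((x))`: constant term first in `x`, then in `y`. -/
def f_yx : LaurentSeries (LaurentSeries ℂ) :=
  HahnSeries.C (expInner (-2)) * expOuter 1 *
    (outerVar * HahnSeries.C innerVar * (outerVar + HahnSeries.C innerVar))⁻¹

/-- `f` after the substitution `u = x+y`, in `ℂ((x))((u))`. -/
def f_x_xy : LaurentSeries (LaurentSeries ℂ) :=
  HahnSeries.C (expInner 3) * expOuter (-2) *
    (HahnSeries.C innerVar * outerVar * (outerVar - HahnSeries.C innerVar))⁻¹

/-- `f` after the substitution `u = x+y`, in `ℂ((y))((u))`. -/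
def f_y_xy : LaurentSeries (LaurentSeries ℂ) :=
  HahnSeries.C (expInner (-3)) * expOuter 1 *
    ((outerVar - HahnSeries.C innerVar) * HahnSeries.C innerVar * outerVar)⁻¹

namespace CThelp
open HahnSeries
variable {K : Type*} [Field K]




lemma geom (t : K) :
    (1 + PowerSeries.C t * X) * PowerSeries.mk (fun n => (-t)^n) = 1 := by
  ext n
  cases n with
  | zero => simp
  | succ n =>
    rw [add_mul, one_mul, mul_assoc, map_add]
    simp [PowerSeries.coeff_mk, PowerSeries.coeff_succ_X_mul, PowerSeries.coeff_one, pow_succ]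
    ring

lemma keyP (x t : K) (h : x * t = 1) :
    (PowerSeries.C x + X) * PowerSeries.mk (fun n => (-t)^n) = PowerSeries.C x := by
  have h1 : (PowerSeries.C x) * ((1 + PowerSeries.C t * X) *
      PowerSeries.mk (fun n => (-t)^n)) = PowerSeries.C x := by rw [geom, mul_one]
  calc (PowerSeries.C x + X) * PowerSeries.mk (fun n => (-t)^n)
      = (PowerSeries.C x) * ((1 + PowerSeries.C t * X) *
        PowerSeries.mk (fun n => (-t)^n)) := by
        rw [← mul_assoc]
        congr 1
        rw [mul_add, mul_one, ← mul_assoc, ← map_mul, h, map_one, one_mul]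
    _ = _ := h1

lemma keyN (x t : K) (h : x * t = 1) :
    (X - PowerSeries.C x) * PowerSeries.mk (fun n => t^n) = - PowerSeries.C x := by
  have h2 : (-x) * (-t) = 1 := by rw [neg_mul_neg, h]
  have := keyP (-x) (-t) h2
  simp only [neg_neg, map_neg] at this
  linear_combination this

lemma YYinv : (single (1:ℤ) (1:K)) * single (-1:ℤ) (1:K) = 1 := by
  rw [single_mul_single]
  norm_num

lemma invP (x : K) (hx : x ≠ 0) :
    (HahnSeries.C x * single (1:ℤ) 1 * (HahnSeries.C x + single (1:ℤ) 1))⁻¹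
      = HahnSeries.C (x⁻¹ * x⁻¹) * single (-1:ℤ) 1 *
        HahnSeries.ofPowerSeries ℤ K (PowerSeries.mk fun n => (-x⁻¹)^n) := by
  apply inv_eq_of_mul_eq_one_right
  have hC : HahnSeries.C x + single (1:ℤ) (1:K)
      = HahnSeries.ofPowerSeries ℤ K (PowerSeries.C x + X) := by
    rw [map_add, ofPowerSeries_C, ofPowerSeries_X]
  have h1 : (HahnSeries.C x * single (1:ℤ) 1 * (HahnSeries.C x + single (1:ℤ) 1)) *
      (HahnSeries.C (x⁻¹ * x⁻¹) * single (-1:ℤ) 1 *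
        HahnSeries.ofPowerSeries ℤ K (PowerSeries.mk fun n => (-x⁻¹)^n))
      = (HahnSeries.C x * HahnSeries.C (x⁻¹ * x⁻¹)) *
        ((single (1:ℤ) (1:K)) * single (-1:ℤ) (1:K)) *
        ((HahnSeries.C x + single (1:ℤ) 1) *
          HahnSeries.ofPowerSeries ℤ K (PowerSeries.mk fun n => (-x⁻¹)^n)) := by ring
  rw [h1, YYinv, mul_one, hC, ← map_mul (HahnSeries.ofPowerSeries ℤ K),
    keyP x x⁻¹ (mul_inv_cancel₀ hx), ofPowerSeries_C, ← map_mul, ← map_mul]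
  rw [show x * (x⁻¹ * x⁻¹) * x = 1 by field_simp]
  exact map_one _

lemma invN (x : K) (hx : x ≠ 0) :
    (HahnSeries.C x * single (1:ℤ) 1 * (single (1:ℤ) 1 - HahnSeries.C x))⁻¹
      = -(HahnSeries.C (x⁻¹ * x⁻¹) * single (-1:ℤ) 1 *
        HahnSeries.ofPowerSeries ℤ K (PowerSeries.mk fun n => (x⁻¹)^n)) := by
  apply inv_eq_of_mul_eq_one_right
  have hC : single (1:ℤ) (1:K) - HahnSeries.C x
      = HahnSeries.ofPowerSeries ℤ K (X - PowerSeries.C x) := by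
    rw [map_sub, ofPowerSeries_C, ofPowerSeries_X]
  have h1 : (HahnSeries.C x * single (1:ℤ) 1 * (single (1:ℤ) 1 - HahnSeries.C x)) *
      (-(HahnSeries.C (x⁻¹ * x⁻¹) * single (-1:ℤ) 1 *
        HahnSeries.ofPowerSeries ℤ K (PowerSeries.mk fun n => (x⁻¹)^n)))
      = (HahnSeries.C x * HahnSeries.C (x⁻¹ * x⁻¹)) *
        ((single (1:ℤ) (1:K)) * single (-1:ℤ) (1:K)) *
        (-((single (1:ℤ) 1 - HahnSeries.C x) *
          HahnSeries.ofPowerSeries ℤ K (PowerSeries.mk fun n => (x⁻¹)^n))) := by ring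
  rw [h1, YYinv, mul_one, hC, ← map_mul (HahnSeries.ofPowerSeries ℤ K),
    keyN x x⁻¹ (mul_inv_cancel₀ hx), map_neg, neg_neg, ofPowerSeries_C,
    HahnSeries.C_apply, HahnSeries.C_apply]
  simp only [single_mul_single, zero_add, add_zero]
  rw [show x * (x⁻¹ * x⁻¹) * x = 1 by field_simp]
  norm_num

lemma invN' (x : K) (hx : x ≠ 0) :
    (HahnSeries.C x * single (1:ℤ) 1 * (single (1:ℤ) 1 - HahnSeries.C x))⁻¹
      = HahnSeries.C (-(x⁻¹ * x⁻¹)) * single (-1:ℤ) 1 *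
        HahnSeries.ofPowerSeries ℤ K (PowerSeries.mk fun n => (x⁻¹)^n) := by
  rw [invN x hx, map_neg]
  ring

lemma coeff_zero_form (a b : K) (P Q : PowerSeries K) :
    (HahnSeries.C a * HahnSeries.ofPowerSeries ℤ K P *
      (HahnSeries.C b * single (-1:ℤ) 1 * HahnSeries.ofPowerSeries ℤ K Q)).coeff 0
      = a * b * PowerSeries.coeff 1 (P * Q) := by
  have h2 : HahnSeries.C a * HahnSeries.C b * single (-1:ℤ) (1:K) = single (-1:ℤ) (a*b) := by
    rw [HahnSeries.C_apply, HahnSeries.C_apply, single_mul_single, single_mul_single]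
    norm_num
  have h1 : HahnSeries.C a * HahnSeries.ofPowerSeries ℤ K P *
      (HahnSeries.C b * single (-1:ℤ) 1 * HahnSeries.ofPowerSeries ℤ K Q)
      = single (-1:ℤ) (a * b) * HahnSeries.ofPowerSeries ℤ K (P * Q) := by
    rw [map_mul (HahnSeries.ofPowerSeries ℤ K) P Q, ← h2]
    ring
  rw [h1, show (0:ℤ) = 1 + -1 by norm_num, coeff_single_mul_add]
  congr 1
  exact_mod_cast ofPowerSeries_apply_coeff (P * Q) 1

lemma coeff_one_mul (P Q : PowerSeries K) :
    PowerSeries.coeff 1 (P * Q)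
      = PowerSeries.coeff 0 P * PowerSeries.coeff 1 Q
        + PowerSeries.coeff 1 P * PowerSeries.coeff 0 Q := by
  rw [PowerSeries.coeff_mul, show Finset.HasAntidiagonal.antidiagonal 1 = {(0,1),(1,0)} from rfl]
  simp


-- Main computations specialised to the statement's definitions.

lemma innerVar_ne : innerVar ≠ 0 := HahnSeries.single_ne_zero one_ne_zero

lemma innerVar_inv : innerVar⁻¹ = HahnSeries.single (-1:ℤ) (1:ℂ) := by
  apply inv_eq_of_mul_eq_one_right
  exact YYinv

lemma main_coeff_P (a c : LaurentSeries ℂ) :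
    (HahnSeries.C a * expOuter c *
      (HahnSeries.C innerVar * outerVar * (HahnSeries.C innerVar + outerVar))⁻¹).coeff 0
    = a * (innerVar⁻¹ * innerVar⁻¹) * (innerVar⁻¹ * (-1) + c) := by
  rw [expOuter, outerVar, invP innerVar innerVar_ne, coeff_zero_form, coeff_one_mul]
  simp only [PowerSeries.coeff_mk, coeff_rescale, PowerSeries.coeff_exp, pow_zero, pow_one,
    Nat.factorial_zero, Nat.factorial_one, Nat.cast_one, div_one, map_one]
  ring

lemma main_coeff_N (a c : LaurentSeries ℂ) :
    (HahnSeries.C a * expOuter c *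
      (HahnSeries.C innerVar * outerVar * (outerVar - HahnSeries.C innerVar))⁻¹).coeff 0
    = -(a * (innerVar⁻¹ * innerVar⁻¹) * (innerVar⁻¹ * 1 + c)) := by
  rw [expOuter, outerVar, invN' innerVar innerVar_ne, coeff_zero_form, coeff_one_mul]
  simp only [PowerSeries.coeff_mk, coeff_rescale, PowerSeries.coeff_exp, pow_zero, pow_one,
    Nat.factorial_zero, Nat.factorial_one, Nat.cast_one, div_one, map_one]
  ring

lemma combo (e g : ℂ) :
    innerVar⁻¹ * innerVar⁻¹ * (innerVar⁻¹ * HahnSeries.C e + HahnSeries.C g)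
      = HahnSeries.single (-3:ℤ) e + HahnSeries.single (-2:ℤ) g := by
  rw [innerVar_inv, HahnSeries.C_apply, HahnSeries.C_apply, mul_add]
  simp only [HahnSeries.single_mul_single]
  norm_num

lemma inner_single (c : ℂ) (n : ℕ) (r : ℂ) :
    (expInner c * HahnSeries.single (-(n:ℤ)) r).coeff 0 = c^n / (n.factorial : ℂ) * r := by
  have h := HahnSeries.coeff_mul_single_add (x := expInner c) (r := r)
    (a := ((n:ℤ))) (b := -(n:ℤ))
  rw [add_neg_cancel] at h
  rw [h, expInner, HahnSeries.ofPowerSeries_apply_coeff, coeff_rescale, PowerSeries.coeff_exp,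
    eq_ratCast]
  push_cast
  ring

lemma inner_combo (c e g : ℂ) :
    (expInner c * (HahnSeries.single (-3:ℤ) e + HahnSeries.single (-2:ℤ) g)).coeff 0
      = c^3 / 6 * e + c^2 / 2 * g := by
  rw [mul_add, HahnSeries.coeff_add,
    show (-3:ℤ) = -((3:ℕ):ℤ) by norm_num, show (-2:ℤ) = -((2:ℕ):ℤ) by norm_num,
    inner_single, inner_single]
  norm_num [Nat.factorial]

lemma cneg2 : (-2 : LaurentSeries ℂ) = HahnSeries.C (-2 : ℂ) := by
  rw [map_neg, map_ofNat]

lemma cone : (1 : LaurentSeries ℂ) = HahnSeries.C (1 : ℂ) := by rw [map_one]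

lemma cnegone : (-1 : LaurentSeries ℂ) = HahnSeries.C (-1 : ℂ) := by
  rw [map_neg, map_one]

lemma ICT_f_xy : ICT2 f_xy = -7/6 := by
  rw [ICT2, f_xy, main_coeff_P, cneg2, cnegone, mul_assoc, combo, inner_combo]
  norm_num

lemma ICT_f_x_xy : ICT2 f_x_xy = 9/2 := by
  rw [ICT2, f_x_xy, main_coeff_N, cneg2, show innerVar⁻¹ * 1 = innerVar⁻¹ * HahnSeries.C (1:ℂ) by
    rw [map_one], mul_assoc, combo, HahnSeries.coeff_neg, inner_combo]
  norm_num

lemma ICT_f_yx : ICT2 f_yx = 10/3 := by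
  rw [ICT2, f_yx,
    show outerVar * HahnSeries.C innerVar * (outerVar + HahnSeries.C innerVar)
      = HahnSeries.C innerVar * outerVar * (HahnSeries.C innerVar + outerVar) by ring,
    main_coeff_P, cnegone, cone, mul_assoc, combo, inner_combo]
  norm_num

lemma ICT_f_y_xy : ICT2 f_y_xy = 0 := by
  rw [ICT2, f_y_xy,
    show (outerVar - HahnSeries.C innerVar) * HahnSeries.C innerVar * outerVar
      = HahnSeries.C innerVar * outerVar * (outerVar - HahnSeries.C innerVar) by ring,
    main_coeff_N, show innerVar⁻¹ * 1 = innerVar⁻¹ * HahnSeries.C (1:ℂ) by rw [map_one],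
    cone, mul_assoc, combo, HahnSeries.coeff_neg, inner_combo]
  norm_num

end CThelp
open CThelp in
/-- Both orthogonal-basis expansions of `CT^𝒜(e^{x-2y}/(xy(x+y)))` give `10/3`. -/
theorem ct_orthogonal_bases_agree :
    ICT2 f_xy + ICT2 f_x_xy = 10 / 3 ∧ ICT2 f_yx + ICT2 f_y_xy = 10 / 3 := by
  rw [CThelp.ICT_f_xy, CThelp.ICT_f_x_xy, CThelp.ICT_f_yx, CThelp.ICT_f_y_xy]
  norm_num

end
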